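/- With moves as in the picture cube puzzle (u = (1 4 2 3), d = (1 3 2 4) acting on rows, l = (1 3 4 2), r = (1 2 4 3) acting on columns of S_4^{m×n}), the subgroup H generated by all row and column moves contains A_4^{m×n}, the subgroup of matrices all of whose entries are even permutations. -/

import Mathlib

def rowMove {G : Type*} [Group G] (m n : ℕ) (r : G) (i : Fin m) : Fin m → Fin n → G :=
  fun i' _ => if i' = i then r else 1

def colMove {G : Type*} [Group G] (m n : ℕ) (c : G) (j : Fin n) : Fin m → Fin n → G :=
  fun _ j' => if j' = j then c else 1

def cubeU : Equiv.Perm (Fin 4) := c[(0 : Fin 4), 3, 1, 2]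
def cubeD : Equiv.Perm (Fin 4) := c[(0 : Fin 4), 2, 1, 3]
def cubeL : Equiv.Perm (Fin 4) := c[(0 : Fin 4), 2, 3, 1]
def cubeR : Equiv.Perm (Fin 4) := c[(0 : Fin 4), 1, 3, 2]

def cubeMoves (m n : ℕ) : Set (Fin m → Fin n → Equiv.Perm (Fin 4)) :=
  {f | ∃ i, f = rowMove m n cubeU i ∨ f = rowMove m n cubeD i} ∪
  {f | ∃ j, f = colMove m n cubeL j ∨ f = colMove m n cubeR j}

open scoped commutatorElement

/-- The hom placing a permutation in a single entry of the matrix. -/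
def entryHom (m n : ℕ) (i : Fin m) (j : Fin n) :
    Equiv.Perm (Fin 4) →* (Fin m → Fin n → Equiv.Perm (Fin 4)) where
  toFun g := fun i' j' => if i' = i ∧ j' = j then g else 1
  map_one' := by funext i' j'; simp
  map_mul' g h := by
    funext i' j'
    by_cases hc : i' = i ∧ j' = j <;> simp [hc]

lemma entry_comm (m n : ℕ) (i : Fin m) (j : Fin n) (x y : Equiv.Perm (Fin 4)) :
    ⁅rowMove m n x i, colMove m n y j⁆ = entryHom m n i j ⁅x, y⁆ := by
  funext i' j'
  simp only [commutatorElement_def, entryHom, rowMove, colMove, MonoidHom.coe_mk,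
    OneHom.coe_mk, Pi.mul_apply, Pi.inv_apply]
  by_cases h1 : i' = i <;> by_cases h2 : j' = j <;> simp [h1, h2]

set_option maxRecDepth 20000 in
theorem cube_puzzle_contains_A4_matrices (m n : ℕ) (hm : 0 < m) (hn : 0 < n)
    (g : Fin m → Fin n → Equiv.Perm (Fin 4))
    (hg : ∀ i j, g i j ∈ alternatingGroup (Fin 4)) :
    g ∈ Subgroup.closure (cubeMoves m n) := by
  set H := Subgroup.closure (cubeMoves m n) with hH
  have hrow : ∀ (x : Equiv.Perm (Fin 4)), (x = cubeU ∨ x = cubeD) → ∀ i : Fin m,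
      rowMove m n x i ∈ H := by
    rintro x (rfl | rfl) i <;>
      exact Subgroup.subset_closure (Or.inl ⟨i, by simp⟩)
  have hcol : ∀ (y : Equiv.Perm (Fin 4)), (y = cubeL ∨ y = cubeR) → ∀ j : Fin n,
      colMove m n y j ∈ H := by
    rintro y (rfl | rfl) j <;>
      exact Subgroup.subset_closure (Or.inr ⟨j, by simp⟩)
  have hentry : ∀ (i : Fin m) (j : Fin n) (a : Equiv.Perm (Fin 4)),
      a ∈ alternatingGroup (Fin 4) → entryHom m n i j a ∈ H := by
    intro i j a ha
    set K : Subgroup (Equiv.Perm (Fin 4)) := H.comap (entryHom m n i j) with hK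
    change a ∈ K
    have hcm : ∀ (x y : Equiv.Perm (Fin 4)), (x = cubeU ∨ x = cubeD) →
        (y = cubeL ∨ y = cubeR) → ⁅x, y⁆ ∈ K := by
      intro x y hx hy
      have hR := hrow x hx i
      have hC := hcol y hy j
      show entryHom m n i j ⁅x, y⁆ ∈ H
      rw [← entry_comm, commutatorElement_def]
      exact mul_mem (mul_mem (mul_mem hR hC) (inv_mem hR)) (inv_mem hC)
    have hA : ⁅cubeU, cubeL⁆ ∈ K := hcm _ _ (Or.inl rfl) (Or.inl rfl)
    have hB : ⁅cubeU, cubeR⁆ ∈ K := hcm _ _ (Or.inl rfl) (Or.inr rfl)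
    have hE : ⁅cubeD, cubeR⁆ ∈ K := hcm _ _ (Or.inr rfl) (Or.inr rfl)
    have hC : ⁅cubeD, cubeL⁆ ∈ K := hcm _ _ (Or.inr rfl) (Or.inl rfl)
    have key : ∀ σ : Equiv.Perm (Fin 4), Equiv.Perm.sign σ = 1 →
        σ = 1 ∨ σ = ⁅cubeD, cubeL⁆ ∨ σ = ⁅cubeU, cubeL⁆ * ⁅cubeU, cubeR⁆ ∨
        σ = ⁅cubeU, cubeL⁆ * ⁅cubeU, cubeL⁆ * ⁅cubeD, cubeL⁆ ∨
        σ = ⁅cubeU, cubeL⁆ * ⁅cubeU, cubeL⁆ ∨ σ = ⁅cubeU, cubeR⁆ ∨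
        σ = ⁅cubeU, cubeL⁆ ∨ σ = ⁅cubeU, cubeL⁆ * ⁅cubeD, cubeL⁆ ∨
        σ = ⁅cubeU, cubeL⁆ * ⁅cubeU, cubeL⁆ * ⁅cubeU, cubeR⁆ ∨
        σ = ⁅cubeU, cubeL⁆ * ⁅cubeD, cubeR⁆ ∨ σ = ⁅cubeD, cubeR⁆ ∨
        σ = ⁅cubeU, cubeL⁆ * ⁅cubeU, cubeL⁆ * ⁅cubeD, cubeR⁆ := by
      decide
    rcases key a (Equiv.Perm.mem_alternatingGroup.mp ha) with h | h | h | h | h | h | h | h | h | h | h | h <;> subst h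
    · exact one_mem K
    · exact hC
    · exact mul_mem hA hB
    · exact mul_mem (mul_mem hA hA) hC
    · exact mul_mem hA hA
    · exact hB
    · exact hA
    · exact mul_mem hA hC
    · exact mul_mem (mul_mem hA hA) hB
    · exact mul_mem hA hE
    · exact hE
    · exact mul_mem (mul_mem hA hA) hE
  have hsub : ∀ s : Finset (Fin m × Fin n),
      (fun i j => if (i, j) ∈ s then g i j else 1) ∈ H := by
    intro s
    induction s using Finset.induction_on with
    | empty =>
      have h1 : (fun (i : Fin m) (j : Fin n) => if (i, j) ∈ (∅ : Finset (Fin m × Fin n))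
          then g i j else 1) = 1 := by
        funext i j; simp
      rw [h1]; exact one_mem H
    | @insert p s hp ih =>
      obtain ⟨pi, pj⟩ := p
      have hdec : (fun i j => if (i, j) ∈ insert (pi, pj) s then g i j else 1) =
          entryHom m n pi pj (g pi pj) * (fun i j => if (i, j) ∈ s then g i j else 1) := by
        funext i' j'
        simp only [Pi.mul_apply, entryHom, MonoidHom.coe_mk, OneHom.coe_mk, Finset.mem_insert,
          Prod.mk.injEq]
        by_cases h1 : i' = pi <;> by_cases h2 : j' = pj
        · subst h1; subst h2
          simp [hp]
        all_goals simp [h1, h2]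
      rw [hdec]
      exact mul_mem (hentry pi pj _ (hg pi pj)) ih
  have hgeq : g = fun i j => if (i, j) ∈ (Finset.univ : Finset (Fin m × Fin n))
      then g i j else 1 := by
    funext i j; simp
  rw [hgeq]
  exact hsub Finset.univ
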